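/- Let f ∈ ℝ⟦X⟧ have constant coefficient 0 and nonzero linear coefficient, and let h = X·(1−X)⁻¹ ∈ ℝ⟦X⟧ (the series z/(1−z)). Then f∘h = h∘f if and only if there exists r ∈ ℝ such that f = X·(1−r·X)⁻¹. -/

import Mathlib

open PowerSeries Finset

noncomputable def geomS (r : ℝ) : PowerSeries ℝ := PowerSeries.mk fun n => r ^ n

lemma geomS_mul (r : ℝ) : (1 - C r * X) * geomS r = 1 := by
  ext n
  cases n with
  | zero => simp [geomS, coeff_mul]
  | succ m =>
    rw [sub_mul, one_mul, map_sub]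
    have : (C r * X) * geomS r = C r * (X * geomS r) := by ring
    rw [this, coeff_C_mul, coeff_succ_X_mul]
    simp [geomS, pow_succ, mul_comm]

lemma inv_eq_geomS (r : ℝ) : (1 - C r * X)⁻¹ = geomS r := by
  rw [PowerSeries.inv_eq_iff_mul_eq_one]
  · rw [mul_comm]; exact geomS_mul r
  · simp

noncomputable def GG (r : ℝ) : PowerSeries ℝ :=
  PowerSeries.mk fun n => if n = 0 then 0 else r ^ (n - 1)

lemma GG_eq (r : ℝ) : X * (1 - C r * X)⁻¹ = GG r := by
  rw [inv_eq_geomS]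
  ext n
  cases n with
  | zero => simp [GG, geomS, coeff_mul]
  | succ m => rw [coeff_succ_X_mul]; simp [GG, geomS]

lemma coeff_geomS_pow (r : ℝ) : ∀ k m, coeff m ((geomS r) ^ (k + 1)) = (m + k).choose m * r ^ m := by
  intro k
  induction k with
  | zero => intro m; simp [geomS]
  | succ k ih =>
    intro m
    rw [pow_succ, coeff_mul, Finset.Nat.sum_antidiagonal_eq_sum_range_succ_mk]
    have : ∀ i ∈ Finset.range (m + 1),
        coeff i ((geomS r) ^ (k+1)) * coeff (m - i) (geomS r)
          = ((i + k).choose k : ℝ) * r ^ m := by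
      intro i hi
      have hi' := Finset.mem_range.mp hi
      rw [ih i]
      simp only [geomS, coeff_mk]
      rw [mul_assoc, ← pow_add]
      have hc : (i + k).choose i = (i + k).choose k := by
        have := Nat.choose_symm (Nat.le_add_left k i)
        simpa using this
      rw [hc]
      congr 2
      omega
    rw [Finset.sum_congr rfl this, ← Finset.sum_mul, ← Nat.cast_sum,
      Nat.sum_range_add_choose m k]
    congr 2
    rw [← Nat.choose_symm (by omega : m ≤ m + (k+1))]
    congr 1
    omega

lemma GG_eq_X_mul (r : ℝ) : GG r = X * geomS r := by
  ext n
  cases n with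
  | zero => simp [GG, geomS, coeff_mul]
  | succ m => rw [coeff_succ_X_mul]; simp [GG, geomS]

lemma coeff_zero_of_lt {f : PowerSeries ℝ} (hf0 : constantCoeff f = 0)
    {k n : ℕ} (h : n < k) : coeff n (f ^ k) = 0 := by
  have hd : (X : PowerSeries ℝ) ^ k ∣ f ^ k :=
    pow_dvd_pow_of_dvd (PowerSeries.X_dvd_iff.mpr hf0) k
  exact (PowerSeries.X_pow_dvd_iff.mp hd) n h

lemma coeff_GG_pow (r : ℝ) {k n : ℕ} (hk1 : 1 ≤ k) (hkn : k ≤ n) :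
    coeff n ((GG r) ^ k) = (n - 1).choose (k - 1) * r ^ (n - k) := by
  obtain ⟨j, rfl⟩ := Nat.exists_eq_add_of_le hk1
  obtain ⟨m, hm⟩ := Nat.exists_eq_add_of_le hkn
  rw [GG_eq_X_mul, mul_pow, hm, add_comm (1 + j) m, coeff_X_pow_mul,
    add_comm 1 j, coeff_geomS_pow, Nat.choose_symm_add]
  congr 2
  · congr 1 <;> omega

lemma agree_pow {f g : PowerSeries ℝ} (hf0 : constantCoeff f = 0)
    (hg0 : constantCoeff g = 0) {N : ℕ}
    (hag : ∀ i ≤ N, coeff i f = coeff i g) :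
    ∀ k m, m ≤ N + k → coeff m (f ^ (k + 1)) = coeff m (g ^ (k + 1)) := by
  intro k
  induction k with
  | zero => intro m hm; simpa using hag m (by omega)
  | succ k ih =>
    intro m hm
    rw [pow_succ f (k+1), pow_succ g (k+1), coeff_mul, coeff_mul,
      Finset.Nat.sum_antidiagonal_eq_sum_range_succ_mk,
      Finset.Nat.sum_antidiagonal_eq_sum_range_succ_mk]
    apply Finset.sum_congr rfl
    intro i hi
    have hi' := Finset.mem_range.mp hi
    by_cases hik : i < k + 1
    · rw [coeff_zero_of_lt hf0 hik, coeff_zero_of_lt hg0 hik, zero_mul, zero_mul]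
    · push_neg at hik
      by_cases hj : m - i = 0
      · rw [hj]
        simp only [coeff_zero_eq_constantCoeff, hf0, hg0, mul_zero]
      · rw [ih i (by omega), hag (m - i) (by omega)]

/-- Substitution (composition) of formal power series: `psComp g f = g ∘ f`,
the substitution of `f` into `g`.  When `f` has zero constant coefficient, the
`n`-th coefficient of `g ∘ f` is `∑_{k=0}^{n} g_k · [zⁿ] fᵏ`. -/
noncomputable def psComp (g f : PowerSeries ℝ) : PowerSeries ℝ :=
  PowerSeries.mk fun n => ∑ k ∈ Finset.range (n + 1),
    PowerSeries.coeff k g * PowerSeries.coeff n (f ^ k)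

lemma coeff_psComp (g f : PowerSeries ℝ) (n : ℕ) :
    coeff n (psComp g f) = ∑ k ∈ Finset.range (n + 1),
      coeff k g * coeff n (f ^ k) := coeff_mk _ _

lemma coeff_psComp_GG (a b : ℝ) (m : ℕ) :
    coeff (m+1) (psComp (GG a) (GG b))
      = ∑ i ∈ Finset.range (m+1), a ^ i * (m.choose i * b ^ (m - i)) := by
  rw [coeff_psComp, Finset.sum_range_succ']
  have h0 : coeff 0 (GG a) * coeff (m+1) ((GG b) ^ 0) = 0 := by simp [GG]
  rw [h0, add_zero]
  apply Finset.sum_congr rfl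
  intro i hi
  have hi' := Finset.mem_range.mp hi
  rw [coeff_GG_pow b (by omega) (by omega)]
  have h1 : coeff (i+1) (GG a) = a ^ i := by simp [GG]
  rw [h1]
  congr 2
  · congr 1 <;> omega

lemma GG_comm (r : ℝ) : psComp (GG r) (GG 1) = psComp (GG 1) (GG r) := by
  ext n
  cases n with
  | zero => simp [psComp, GG]
  | succ m =>
    rw [coeff_psComp_GG, coeff_psComp_GG]
    have h1 : ∑ i ∈ Finset.range (m+1), r ^ i * ((m.choose i : ℝ) * (1:ℝ) ^ (m - i))
        = (r + 1) ^ m := by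
      rw [add_pow]
      apply Finset.sum_congr rfl
      intro i _; ring
    have h2 : ∑ i ∈ Finset.range (m+1), (1:ℝ) ^ i * ((m.choose i : ℝ) * r ^ (m - i))
        = (1 + r) ^ m := by
      rw [add_pow]
      apply Finset.sum_congr rfl
      intro i _; ring
    rw [h1, h2, add_comm]

lemma GG_const (s : ℝ) : constantCoeff (GG s) = 0 := by
  have : coeff 0 (GG s) = 0 := by simp [GG]
  rwa [coeff_zero_eq_constantCoeff] at this

lemma sqco (g : PowerSeries ℝ) (m : ℕ) :
    coeff m (g ^ 2) = ∑ i ∈ Finset.range (m + 1), coeff i g * coeff (m - i) g := by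
  rw [pow_two, coeff_mul, Finset.Nat.sum_antidiagonal_eq_sum_range_succ_mk]

lemma forward (f : PowerSeries ℝ) (hf0 : constantCoeff f = 0) (hf1 : coeff 1 f ≠ 0)
    (Heq : psComp f (GG 1) = psComp (GG 1) f) :
    f = GG (coeff 2 f) := by
  set r := coeff 2 f with hr
  have E : ∀ n : ℕ, ∑ k ∈ Finset.range (n+2), coeff k f * coeff (n+1) ((GG 1)^k)
      = ∑ k ∈ Finset.range (n+2), coeff k (GG 1) * coeff (n+1) (f^k) := by
    intro n
    have := congrArg (coeff (n+1)) Heq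
    rwa [coeff_psComp, coeff_psComp] at this
  have Eg : ∀ n : ℕ, ∑ k ∈ Finset.range (n+2), coeff k (GG r) * coeff (n+1) ((GG 1)^k)
      = ∑ k ∈ Finset.range (n+2), coeff k (GG 1) * coeff (n+1) ((GG r)^k) := by
    intro n
    have := congrArg (coeff (n+1)) (GG_comm r)
    rwa [coeff_psComp, coeff_psComp] at this
  -- Step A : coeff 1 f = 1
  have hA : coeff 1 f = 1 := by
    have e := E 1
    have c1 : coeff 2 ((GG 1)^1) = 1 := by simp [GG]
    have c2 : coeff 2 ((GG 1)^2) = 1 := by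
      rw [coeff_GG_pow 1 (by omega) (by omega)]; norm_num
    have c3 : coeff 2 (f^2) = coeff 1 f * coeff 1 f := by
      rw [sqco]
      rw [Finset.sum_range_succ, Finset.sum_range_succ, Finset.sum_range_succ,
        Finset.sum_range_zero]
      simp [coeff_zero_eq_constantCoeff, hf0]
    rw [Finset.sum_range_succ, Finset.sum_range_succ, Finset.sum_range_succ,
      Finset.sum_range_zero, Finset.sum_range_succ, Finset.sum_range_succ,
      Finset.sum_range_succ, Finset.sum_range_zero] at e
    simp only [pow_zero, coeff_one, c1, c2, c3, coeff_zero_eq_constantCoeff, hf0,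
      GG_const, pow_one] at e
    have hg1 : coeff 1 (GG 1) = 1 := by simp [GG]
    have hg2 : coeff 2 (GG 1) = 1 := by simp [GG]
    rw [hg1, hg2] at e
    have : coeff 1 f * (coeff 1 f - 1) = 0 := by ring_nf; ring_nf at e; linarith
    rcases mul_eq_zero.mp this with h | h
    · exact absurd h hf1
    · linarith
  have key : ∀ n : ℕ, coeff n f = coeff n (GG r) := by
    intro n
    induction n using Nat.strong_induction_on with
    | _ n ih =>
      rcases n with _ | _ | _ | m
      · rw [coeff_zero_eq_constantCoeff, hf0, GG_const]
      · rw [hA]; simp [GG]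
      · rw [← hr]; simp [GG]
      · -- main case n = m + 3
        set n := m + 3 with hn
        have hag : ∀ i ≤ n - 1, coeff i f = coeff i (GG r) := fun i hi => ih i (by omega)
        set c : ℝ := coeff n f - coeff n (GG r) with hc
        set e : ℝ := coeff (n+1) f - coeff (n+1) (GG r) with he
        -- left-hand sides difference
        have Hn : coeff (n+1) ((GG 1)^n) = (n : ℝ) := by
          rw [coeff_GG_pow 1 (by omega) (by omega)]
          have : (n + 1 - 1).choose (n - 1) = n := by
            rw [Nat.add_sub_cancel, ← Nat.choose_symm (by omega : n - 1 ≤ n)]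
            have h2 : n - (n - 1) = 1 := by omega
            rw [h2, Nat.choose_one_right]
          rw [this]; norm_num
        have Hn1 : coeff (n+1) ((GG 1)^(n+1)) = 1 := by
          rw [coeff_GG_pow 1 (by omega) (by omega)]
          simp
        have hL : (∑ k ∈ Finset.range (n+2), coeff k f * coeff (n+1) ((GG 1)^k))
            - (∑ k ∈ Finset.range (n+2), coeff k (GG r) * coeff (n+1) ((GG 1)^k))
            = c * n + e := by
          rw [← Finset.sum_sub_distrib]
          rw [Finset.sum_range_succ, Finset.sum_range_succ]
          have hz : ∑ k ∈ Finset.range n,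
              (coeff k f * coeff (n+1) ((GG 1)^k)
                - coeff k (GG r) * coeff (n+1) ((GG 1)^k)) = 0 := by
            apply Finset.sum_eq_zero
            intro k hk
            have hk' := Finset.mem_range.mp hk
            rw [ih k (by omega)]
            ring
          rw [hz, Hn, Hn1]
          rw [hc, he]; ring
        -- squares difference
        have hsq : coeff (n+1) (f^2) - coeff (n+1) ((GG r)^2) = 2 * c := by
          rw [sqco, sqco, ← Finset.sum_sub_distrib]
          have ht : ∀ i ∈ Finset.range (n+2),
              coeff i f * coeff (n+1-i) f - coeff i (GG r) * coeff (n+1-i) (GG r)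
              = (if i = 1 then c else 0) + (if i = n then c else 0) := by
            intro i hi
            have hi' := Finset.mem_range.mp hi
            have hg1 : coeff 1 (GG r) = 1 := by simp [GG]
            rcases Nat.lt_or_ge i 1 with h0 | h1
            · interval_cases i
              simp only [coeff_zero_eq_constantCoeff, hf0, GG_const, zero_mul, sub_zero,
                sub_self]
              rw [if_neg (show ¬(0:ℕ) = 1 by omega), if_neg (show ¬(0:ℕ) = n by omega), add_zero]
            · rcases Nat.eq_or_lt_of_le h1 with h1e | h2
              · rw [← h1e]
                have : n + 1 - 1 = n := by omega
                rw [this, hA, hg1]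
                rw [if_pos rfl, if_neg (show ¬(1:ℕ) = n by omega), add_zero, hc]
                ring
              · rcases Nat.lt_or_ge i n with hlt | hge
                · -- 2 ≤ i ≤ n-1
                  have e1 : coeff i f = coeff i (GG r) := hag i (by omega)
                  have e2 : coeff (n+1-i) f = coeff (n+1-i) (GG r) :=
                    hag (n+1-i) (by omega)
                  rw [e1, e2]
                  have hi1 : i ≠ 1 := by omega
                  have hin : i ≠ n := by omega
                  simp [hi1, hin]
                · rcases Nat.eq_or_lt_of_le hge with hne | hgt
                  · rw [← hne]
                    have : n + 1 - n = 1 := by omega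
                    rw [this, hA, hg1]
                    rw [if_neg (show ¬n = 1 by omega), if_pos rfl, zero_add, hc]
                    ring
                  · -- i = n+1
                    have : i = n + 1 := by omega
                    subst this
                    have : n + 1 - (n+1) = 0 := by omega
                    rw [this]
                    simp only [coeff_zero_eq_constantCoeff, hf0, GG_const, mul_zero, sub_zero,
                      sub_self]
                    rw [if_neg (show ¬n + 1 = 1 by omega), if_neg (show ¬n + 1 = n by omega),
                      add_zero]
          rw [Finset.sum_congr rfl ht, Finset.sum_add_distrib,
            Finset.sum_ite_eq' (Finset.range (n+2)) 1 (fun _ => c),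
            Finset.sum_ite_eq' (Finset.range (n+2)) n (fun _ => c)]
          have m1 : (1 : ℕ) ∈ Finset.range (n+2) := by simp
          have m2 : n ∈ Finset.range (n+2) := by simp
          rw [if_pos m1, if_pos m2]
          ring
        -- right-hand sides difference
        have hR : (∑ k ∈ Finset.range (n+2), coeff k (GG 1) * coeff (n+1) (f^k))
            - (∑ k ∈ Finset.range (n+2), coeff k (GG 1) * coeff (n+1) ((GG r)^k))
            = e + 2 * c := by
          rw [← Finset.sum_sub_distrib]
          have hsub : Finset.range 3 ⊆ Finset.range (n+2) := by
            apply Finset.range_subset_range.mpr; omega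
          rw [← Finset.sum_subset hsub ?hzero]
          case hzero =>
            intro k hk hk3
            have hk' := Finset.mem_range.mp hk
            have hk3' : 3 ≤ k := by
              simp only [Finset.mem_range] at hk3; omega
            obtain ⟨j, rfl⟩ : ∃ j, k = j + 3 := ⟨k - 3, by omega⟩
            have : coeff (n+1) (f^(j+3)) = coeff (n+1) ((GG r)^(j+3)) := by
              have := agree_pow hf0 (GG_const r) hag (j+2) (n+1) (by omega)
              convert this using 2
            rw [this]; ring
          rw [Finset.sum_range_succ, Finset.sum_range_succ, Finset.sum_range_succ,
            Finset.sum_range_zero]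
          have hg0 : coeff 0 (GG 1) = 0 := by simp [GG]
          have hg1 : coeff 1 (GG 1) = 1 := by simp [GG]
          have hg2 : coeff 2 (GG 1) = 1 := by simp [GG]
          simp only [hg0, hg1, hg2, pow_one, zero_mul, one_mul, zero_add]
          linarith [hsq, he]
        -- combine
        have hfin : c * n + e = e + 2 * c := by
          rw [← hL, ← hR, E n, Eg n]
        have : c * ((m : ℝ) + 1) = 0 := by
          have hn' : (n : ℝ) = (m : ℝ) + 3 := by rw [hn]; push_cast; ring
          rw [hn'] at hfin
          linarith
        have hc0 : c = 0 := by
          rcases mul_eq_zero.mp this with h | h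
          · exact h
          · exfalso; have : (0:ℝ) ≤ (m:ℝ) := Nat.cast_nonneg m; linarith
        have := hc0
        rw [hc] at this
        linarith
  ext n
  exact key n

theorem stmt4 (f : PowerSeries ℝ)
    (hf0 : constantCoeff f = 0) (hf1 : coeff 1 f ≠ 0)
    (h : PowerSeries ℝ) (hh : h = X * (1 - X)⁻¹) :
    psComp f h = psComp h f ↔ ∃ r : ℝ, f = X * (1 - C r * X)⁻¹ := by
  have hC1 : (C 1 : PowerSeries ℝ) = 1 := map_one _
  have hhG : h = GG 1 := by rw [hh, ← GG_eq 1, hC1, one_mul]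
  constructor
  · intro Heq
    refine ⟨coeff 2 f, ?_⟩
    rw [GG_eq]
    rw [hhG] at Heq
    exact forward f hf0 hf1 Heq
  · rintro ⟨r, rfl⟩
    rw [hhG, GG_eq]
    exact GG_comm r
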